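/- Let n ≥ 2 be even and q = 2^r. Define A₁⁺(n,q) = q^{(5n²−6n)/4} [n choose 1]_q Π_{j=1}^{n/2}(q^{2j−1}−1) and B₁⁺(n,q) = q^{(n−2)²/4} Π_{j=1}^{n/2}(q^{2j}−1). Then for every β ∈ F_q, the quantity N(β) = q^{−1}A₁⁺(n,q)B₁⁺(n,q) + q^{−1}A₁⁺(n,q)·ε(β) is a positive integer, where ε(β) = 1 if β = 0, ε(β) = q+1 if β ≠ 0 and tr(β⁻¹) = 0, and ε(β) = 1−q if β ≠ 0 and tr(β⁻¹) = 1. -/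

import Mathlib

open Finset
open scoped Classical

noncomputable instance (p n : ℕ) [Fact p.Prime] : Fintype (GaloisField p n) :=
  Fintype.ofFinite _

theorem stmt19 (r n : ℕ) (hr : 1 ≤ r) (hn : 2 ≤ n) (hne : Even n) :
    ∀ β : GaloisField 2 r, ∃ m : ℕ, 0 < m ∧
      ((2 ^ r : ℤ)) * m =
        (((2 ^ r) ^ ((5 * n ^ 2 - 6 * n) / 4) * (((2 ^ r) ^ n - 1) / (2 ^ r - 1)) *
            ∏ j ∈ Finset.range (n / 2), ((2 ^ r) ^ (2 * (j + 1) - 1) - 1) : ℕ) : ℤ) *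
          ((((2 ^ r) ^ ((n - 2) ^ 2 / 4) *
              ∏ j ∈ Finset.range (n / 2), ((2 ^ r) ^ (2 * (j + 1)) - 1) : ℕ) : ℤ) +
            (if β = 0 then 1
             else if Algebra.trace (ZMod 2) (GaloisField 2 r) β⁻¹ = 0 then (2 ^ r : ℤ) + 1
             else 1 - (2 ^ r : ℤ))) := by
  intro β
  have hq2 : 2 ≤ 2 ^ r := by
    calc (2:ℕ) = 2 ^ 1 := (pow_one 2).symm
    _ ≤ 2 ^ r := Nat.pow_le_pow_right (by norm_num) hr
  set q : ℕ := 2 ^ r with hqdef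
  set ε : ℤ := (if β = 0 then 1
             else if Algebra.trace (ZMod 2) (GaloisField 2 r) β⁻¹ = 0 then (2 ^ r : ℤ) + 1
             else 1 - (2 ^ r : ℤ)) with hεdef
  have hqz : ((2:ℤ) ^ r) = (q : ℤ) := by push_cast [hqdef]; ring
  have hε_lb : 1 - (q:ℤ) ≤ ε := by
    have : (2:ℤ) ≤ (q:ℤ) := by exact_mod_cast hq2
    rw [hεdef, hqz]
    split_ifs <;> linarith
  -- exponent of A is at least 1
  have he1 : 1 ≤ (5 * n ^ 2 - 6 * n) / 4 := by
    have h8 : 6 * n + 4 ≤ 5 * n ^ 2 := by nlinarith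
    have h4 : 4 ≤ 5 * n ^ 2 - 6 * n := Nat.le_sub_of_add_le (by linarith)
    exact (Nat.one_le_div_iff (by norm_num)).2 h4
  set e1 : ℕ := (5 * n ^ 2 - 6 * n) / 4 with he1def
  set c : ℕ := (q ^ n - 1) / (q - 1) with hcdef
  set P : ℕ := ∏ j ∈ Finset.range (n / 2), (q ^ (2 * (j + 1) - 1) - 1) with hPdef
  set B : ℕ := q ^ ((n - 2) ^ 2 / 4) * ∏ j ∈ Finset.range (n / 2), (q ^ (2 * (j + 1)) - 1)
    with hBdef
  set A' : ℕ := q ^ (e1 - 1) * c * P with hA'def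
  have hA : q ^ e1 * c * P = q * A' := by
    rw [hA'def]
    have : q ^ e1 = q * q ^ (e1 - 1) := by
      conv_lhs => rw [show e1 = 1 + (e1 - 1) by omega]
      rw [pow_add, pow_one]
    rw [this]; ring
  -- positivity facts
  have hcpos : 0 < c := by
    apply Nat.div_pos _ (by omega)
    have : q ≤ q ^ n := Nat.le_self_pow (by omega) q
    omega
  have hPpos : 0 < P := by
    apply Finset.prod_pos
    intro j _
    have : q ≤ q ^ (2 * (j + 1) - 1) := Nat.le_self_pow (by omega) q
    omega
  have hA'pos : 0 < A' := by
    rw [hA'def]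
    exact Nat.mul_pos (Nat.mul_pos (Nat.pow_pos (by omega)) hcpos) hPpos
  have hn2 : 1 ≤ n / 2 := by omega
  have hBge : q ^ 2 - 1 ≤ B := by
    have h0 : (0:ℕ) ∈ Finset.range (n / 2) := by
      simp [Finset.mem_range]; omega
    have hQ : q ^ 2 - 1 ≤ ∏ j ∈ Finset.range (n / 2), (q ^ (2 * (j + 1)) - 1) := by
      have := Finset.single_le_prod' (f := fun j => q ^ (2 * (j + 1)) - 1)
        (fun j _ => by
          show 1 ≤ q ^ (2 * (j + 1)) - 1
          have : q ≤ q ^ (2 * (j + 1)) := Nat.le_self_pow (by omega) q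
          omega) h0
      simpa using this
    calc q ^ 2 - 1 ≤ ∏ j ∈ Finset.range (n / 2), (q ^ (2 * (j + 1)) - 1) := hQ
    _ = 1 * ∏ j ∈ Finset.range (n / 2), (q ^ (2 * (j + 1)) - 1) := (one_mul _).symm
    _ ≤ B := by
        rw [hBdef]
        exact Nat.mul_le_mul_right _ (Nat.one_le_pow _ _ (by omega))
  have hBεpos : 0 < (B:ℤ) + ε := by
    have h1 : (q:ℤ) ^ 2 - 1 ≤ (B:ℤ) := by
      have : ((q ^ 2 - 1 : ℕ) : ℤ) ≤ (B:ℤ) := by exact_mod_cast hBge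
      have h2 : ((q ^ 2 - 1 : ℕ) : ℤ) = (q:ℤ)^2 - 1 := by
        have : 1 ≤ q ^ 2 := Nat.one_le_pow _ _ (by omega)
        push_cast [this]; ring
      linarith [h2 ▸ this]
    have hq2z : (2:ℤ) ≤ (q:ℤ) := by exact_mod_cast hq2
    nlinarith
  refine ⟨((A' : ℤ) * ((B:ℤ) + ε)).toNat, ?_, ?_⟩
  · have : 0 < (A' : ℤ) * ((B:ℤ) + ε) := mul_pos (by exact_mod_cast hA'pos) hBεpos
    omega
  · have hm : (((A' : ℤ) * ((B:ℤ) + ε)).toNat : ℤ) = (A':ℤ) * ((B:ℤ) + ε) :=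
      Int.toNat_of_nonneg (le_of_lt (mul_pos (by exact_mod_cast hA'pos) hBεpos))
    rw [hm, hqz]
    have hAz : ((q ^ e1 * c * P : ℕ) : ℤ) = (q:ℤ) * (A':ℤ) := by exact_mod_cast hA
    push_cast at hAz ⊢
    nlinarith [hAz]
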